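/- Let k and J be integers with k ≥ 2 and 1 ≤ 2^J ≤ P, and let λ be a real number with 1/k < λ ≤ 1. Setting X_j = 2^{-j}·P for nonnegative integers j, one has for all real β: the sum over 0 ≤ j ≤ J of X_j·(1 + X_j^k·|β|)^{-λ} is ≪ P·(1 + P^k·|β|)^{-1/k}, where the implied constant depends only on k and λ. -/

import Mathlib

open Finset

lemma geom_le' {r : ℝ} (h0 : 0 ≤ r) (h1 : r < 1) (n : ℕ) :
    ∑ i ∈ Finset.range n, r ^ i ≤ 1 / (1 - r) := by
  have hne : r ≠ 1 := ne_of_lt h1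
  rw [geom_sum_eq hne]
  have h1' : (0:ℝ) < 1 - r := by linarith
  have hrn : (0:ℝ) ≤ r ^ n := pow_nonneg h0 n
  have heq : (r ^ n - 1) / (r - 1) = (1 - r ^ n) / (1 - r) := by
    rw [← neg_div_neg_eq]
    ring_nf
  rw [heq]
  gcongr <;> linarith

/-- Key summation lemma: for `a > 0` and `0 < c ≤ 1`,
`∑_{j<N} min((2^j c)^a, (2^j c)⁻¹)` is bounded uniformly. -/
lemma sum_min_le' (a : ℝ) (ha : 0 < a) (c : ℝ) (hc0 : 0 < c) (hc1 : c ≤ 1) (N : ℕ) :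
    ∑ j ∈ Finset.range N, min (((2:ℝ) ^ j * c) ^ a) (((2:ℝ) ^ j * c)⁻¹)
      ≤ 1 / (1 - (2:ℝ) ^ (-a)) + 2 := by
  classical
  have hex : ∃ j : ℕ, 1 < (2:ℝ) ^ j * c := by
    obtain ⟨n, hn⟩ := pow_unbounded_of_one_lt (c⁻¹) (one_lt_two (α := ℝ))
    refine ⟨n, ?_⟩
    rw [inv_eq_one_div] at hn
    have := (div_lt_iff₀ hc0).mp hn
    linarith
  set M := Nat.find hex with hMdef
  have hM : 1 < (2:ℝ) ^ M * c := Nat.find_spec hex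
  have hM0 : M ≠ 0 := by
    intro h
    rw [h] at hM
    simp at hM
    linarith
  have hMlt : ∀ j < M, (2:ℝ) ^ j * c ≤ 1 := fun j hj =>
    le_of_not_gt (Nat.find_min hex hj)
  have hr : (0:ℝ) < (2:ℝ) ^ (-a) := Real.rpow_pos_of_pos two_pos _
  have hr1 : (2:ℝ) ^ (-a) < 1 :=
    Real.rpow_lt_one_of_one_lt_of_neg one_lt_two (by linarith)
  rw [← Finset.sum_filter_add_sum_filter_not (Finset.range N) (fun j => j < M)]
  have part1 : ∑ j ∈ (Finset.range N).filter (fun j => j < M),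
      min (((2:ℝ) ^ j * c) ^ a) (((2:ℝ) ^ j * c)⁻¹) ≤ 1 / (1 - (2:ℝ) ^ (-a)) := by
    have step1 : ∑ j ∈ (Finset.range N).filter (fun j => j < M),
        min (((2:ℝ) ^ j * c) ^ a) (((2:ℝ) ^ j * c)⁻¹)
        ≤ ∑ j ∈ (Finset.range N).filter (fun j => j < M), ((2:ℝ) ^ (-a)) ^ (M - 1 - j) := by
      apply Finset.sum_le_sum
      intro j hj
      simp only [Finset.mem_filter, Finset.mem_range] at hj
      have hjM : j < M := hj.2
      refine le_trans (min_le_left _ _) ?_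
      have hkey : (2:ℝ) ^ j * c ≤ ((2:ℝ) ^ (M - 1 - j))⁻¹ := by
        have hsum : (2:ℝ) ^ j * (2:ℝ) ^ (M - 1 - j) = (2:ℝ) ^ (M - 1) := by
          rw [← pow_add]
          congr 1
          omega
        have hb : (2:ℝ) ^ (M - 1) * c ≤ 1 := hMlt (M - 1) (by omega)
        have hp : (0:ℝ) < (2:ℝ) ^ (M - 1 - j) := by positivity
        rw [show ((2:ℝ) ^ (M - 1 - j))⁻¹ = 1 / (2:ℝ) ^ (M - 1 - j) from (one_div _).symm,
          le_div_iff₀ hp]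
        nlinarith [hsum, hb, hc0.le]
      have h1 : ((2:ℝ) ^ j * c) ^ a ≤ (((2:ℝ) ^ (M - 1 - j))⁻¹) ^ a :=
        Real.rpow_le_rpow (by positivity) hkey ha.le
      refine h1.trans_eq ?_
      rw [← Real.rpow_natCast (2:ℝ) (M - 1 - j), ← Real.rpow_neg (by norm_num),
        ← Real.rpow_natCast ((2:ℝ) ^ (-a)) (M - 1 - j), ← Real.rpow_mul (by norm_num),
        ← Real.rpow_mul (by norm_num)]
      ring_nf
    refine step1.trans ?_
    have step2 : ∑ j ∈ (Finset.range N).filter (fun j => j < M),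
        ((2:ℝ) ^ (-a)) ^ (M - 1 - j) ≤ ∑ j ∈ Finset.range M, ((2:ℝ) ^ (-a)) ^ (M - 1 - j) := by
      apply Finset.sum_le_sum_of_subset_of_nonneg
      · intro j hj
        simp only [Finset.mem_filter, Finset.mem_range] at hj
        exact Finset.mem_range.mpr hj.2
      · intro j _ _
        positivity
    refine step2.trans ?_
    rw [Finset.sum_range_reflect (fun i => ((2:ℝ) ^ (-a)) ^ i) M]
    exact geom_le' hr.le hr1 M
  have part2 : ∑ j ∈ (Finset.range N).filter (fun j => ¬ j < M),
      min (((2:ℝ) ^ j * c) ^ a) (((2:ℝ) ^ j * c)⁻¹) ≤ 2 := by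
    have hfil : (Finset.range N).filter (fun j => ¬ j < M) = Finset.Ico M N := by
      ext j
      simp only [Finset.mem_filter, Finset.mem_range, Finset.mem_Ico, not_lt]
      omega
    rw [hfil, Finset.sum_Ico_eq_sum_range]
    have step1 : ∑ i ∈ Finset.range (N - M),
        min (((2:ℝ) ^ (M + i) * c) ^ a) (((2:ℝ) ^ (M + i) * c)⁻¹)
        ≤ ∑ i ∈ Finset.range (N - M), ((2:ℝ)⁻¹) ^ i := by
      apply Finset.sum_le_sum
      intro i _
      refine le_trans (min_le_right _ _) ?_
      rw [inv_pow]
      have hlow : (2:ℝ) ^ i ≤ (2:ℝ) ^ (M + i) * c := by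
        rw [pow_add]
        calc (2:ℝ) ^ i = 1 * (2:ℝ) ^ i := by ring
        _ ≤ ((2:ℝ) ^ M * c) * (2:ℝ) ^ i := by
            apply mul_le_mul_of_nonneg_right hM.le (by positivity)
        _ = (2:ℝ) ^ M * (2:ℝ) ^ i * c := by ring
      exact inv_anti₀ (by positivity) hlow
    refine step1.trans ?_
    have := geom_le' (by norm_num : (0:ℝ) ≤ 2⁻¹) (by norm_num) (N - M)
    calc ∑ i ∈ Finset.range (N - M), ((2:ℝ)⁻¹) ^ i ≤ 1 / (1 - 2⁻¹) := this
    _ = 2 := by norm_num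
  linarith

/-- Let `k` and `J` be integers with `k ≥ 2` and `1 ≤ 2^J ≤ P`, and let
`λ` be real with `1/k < λ ≤ 1`. Setting `X_j = 2^{-j}·P`, for all real `β` the sum over
`0 ≤ j ≤ J` of `X_j·(1 + X_j^k·|β|)^{-λ}` is `≪ P·(1 + P^k·|β|)^{-1/k}`, with implied
constant depending only on `k` and `λ`. -/
theorem stmt5 (k : ℕ) (hk : 2 ≤ k) (lam : ℝ) (hlam1 : 1 / (k : ℝ) < lam)
    (hlam2 : lam ≤ 1) :
    ∃ C : ℝ, 0 < C ∧ ∀ P : ℝ, 0 < P → ∀ J : ℕ, (2 : ℝ) ^ J ≤ P → ∀ β : ℝ,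
      ∑ j ∈ Finset.range (J + 1),
        ((2 : ℝ) ^ (-(j : ℝ)) * P) *
          (1 + ((2 : ℝ) ^ (-(j : ℝ)) * P) ^ k * |β|) ^ (-lam)
        ≤ C * P * (1 + P ^ k * |β|) ^ (-(1 : ℝ) / k) := by
  classical
  have hk0 : (0:ℝ) < (k:ℝ) := by
    have : (2:ℝ) ≤ (k:ℝ) := by exact_mod_cast hk
    linarith
  have hlam0 : 0 < lam := lt_trans (by positivity) hlam1
  set a : ℝ := (k:ℝ) * lam - 1 with hadef
  have ha : 0 < a := by
    have h1 : 1 < (k:ℝ) * lam := by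
      have := (div_lt_iff₀ hk0).mp hlam1
      nlinarith
    simp only [hadef]; linarith
  have hCpos : 0 < 1 / (1 - (2:ℝ) ^ (-a)) + 2 := by
    have hr1 : (2:ℝ) ^ (-a) < 1 :=
      Real.rpow_lt_one_of_one_lt_of_neg one_lt_two (by linarith)
    have : (0:ℝ) < 1 - (2:ℝ) ^ (-a) := by linarith
    positivity
  refine ⟨1 / (1 - (2:ℝ) ^ (-a)) + 2, hCpos, ?_⟩
  intro P hP J _ β
  set t : ℝ := P ^ k * |β| with htdef
  have ht : 0 ≤ t := by positivity
  have h1t : (0:ℝ) < 1 + t := by linarith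
  set c : ℝ := (1 + t) ^ (-(1:ℝ) / k) with hcdef
  have hc0 : 0 < c := Real.rpow_pos_of_pos h1t _
  have hc1 : c ≤ 1 :=
    Real.rpow_le_one_of_one_le_of_nonpos (by linarith)
      (by rw [neg_div]; exact neg_nonpos.mpr (by positivity))
  have key : ∀ j ∈ Finset.range (J + 1),
      ((2 : ℝ) ^ (-(j : ℝ)) * P) *
          (1 + ((2 : ℝ) ^ (-(j : ℝ)) * P) ^ k * |β|) ^ (-lam)
        ≤ P * c * min (((2:ℝ) ^ j * c) ^ a) (((2:ℝ) ^ j * c)⁻¹) := by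
    intro j _
    have hX : (0:ℝ) < (2:ℝ) ^ (-(j:ℝ)) := Real.rpow_pos_of_pos two_pos _
    have hpow : ((2:ℝ) ^ (-(j:ℝ)) * P) ^ k * |β| = (2:ℝ) ^ (-(j:ℝ) * k) * t := by
      rw [mul_pow, htdef, ← Real.rpow_natCast ((2:ℝ) ^ (-(j:ℝ))) k,
        ← Real.rpow_mul (by norm_num)]
      ring
    rw [hpow]
    set s : ℝ := (2:ℝ) ^ (-(j:ℝ) * k) with hsdef
    have hs0 : 0 < s := Real.rpow_pos_of_pos two_pos _
    have hs1 : s ≤ 1 := by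
      apply Real.rpow_le_one_of_one_le_of_nonpos (by norm_num)
      have : (0:ℝ) ≤ (j:ℝ) * k := by positivity
      linarith
    have hst : 0 ≤ s * t := by positivity
    have hb1 : (1 + s * t) ^ (-lam) ≤ 1 :=
      Real.rpow_le_one_of_one_le_of_nonpos (by linarith) (by linarith)
    have hXeq : ((2:ℝ) ^ j : ℝ)⁻¹ = (2:ℝ) ^ (-(j:ℝ)) := by
      rw [← Real.rpow_natCast (2:ℝ) j, ← Real.rpow_neg (by norm_num)]
    rw [mul_min_of_nonneg _ _ (by positivity : (0:ℝ) ≤ P * c)]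
    apply le_min
    · -- bound via (2^j c)^a
      have h1 : s * (1 + t) ≤ 1 + s * t := by nlinarith
      have h2 : (1 + s * t) ^ (-lam) ≤ (s * (1 + t)) ^ (-lam) :=
        Real.rpow_le_rpow_of_nonpos (by positivity) h1 (by linarith)
      have e2 : P * c * (((2:ℝ) ^ j : ℝ) * c) ^ a
          = (2:ℝ) ^ (-(j:ℝ)) * P * (s * (1 + t)) ^ (-lam) := by
        rw [Real.mul_rpow (by positivity) hc0.le,
          Real.mul_rpow hs0.le h1t.le, hcdef,
          ← Real.rpow_natCast (2:ℝ) j, hsdef,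
          ← Real.rpow_mul (by norm_num : (0:ℝ) ≤ 2),
          ← Real.rpow_mul (by norm_num : (0:ℝ) ≤ 2),
          ← Real.rpow_mul h1t.le]
        have h2j : (2:ℝ) ^ ((j:ℝ) * a) = (2:ℝ) ^ (-(j:ℝ)) * (2:ℝ) ^ (-(j:ℝ) * (k:ℝ) * -lam) := by
          rw [← Real.rpow_add two_pos]
          congr 1
          simp only [hadef]
          ring
        have h1t' : (1 + t) ^ ((-1:ℝ) / (k:ℝ)) * (1 + t) ^ ((-1:ℝ) / (k:ℝ) * a) = (1 + t) ^ (-lam) := by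
          rw [← Real.rpow_add h1t]
          congr 1
          simp only [hadef]
          field_simp
          ring
        rw [h2j, ← h1t']
        ring
      calc ((2:ℝ) ^ (-(j:ℝ)) * P) * (1 + s * t) ^ (-lam)
          ≤ ((2:ℝ) ^ (-(j:ℝ)) * P) * (s * (1 + t)) ^ (-lam) := by
            apply mul_le_mul_of_nonneg_left h2 (by positivity)
        _ = P * c * (((2:ℝ) ^ j : ℝ) * c) ^ a := e2.symm
    · -- bound via (2^j c)⁻¹
      have e1 : P * c * (((2:ℝ) ^ j : ℝ) * c)⁻¹ = (2:ℝ) ^ (-(j:ℝ)) * P := by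
        rw [mul_inv, ← hXeq]
        field_simp
      rw [e1]
      calc ((2:ℝ) ^ (-(j:ℝ)) * P) * (1 + s * t) ^ (-lam)
          ≤ ((2:ℝ) ^ (-(j:ℝ)) * P) * 1 := by
            apply mul_le_mul_of_nonneg_left hb1 (by positivity)
        _ = (2:ℝ) ^ (-(j:ℝ)) * P := by ring
  calc ∑ j ∈ Finset.range (J + 1),
        ((2 : ℝ) ^ (-(j : ℝ)) * P) *
          (1 + ((2 : ℝ) ^ (-(j : ℝ)) * P) ^ k * |β|) ^ (-lam)
      ≤ ∑ j ∈ Finset.range (J + 1),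
          P * c * min (((2:ℝ) ^ j * c) ^ a) (((2:ℝ) ^ j * c)⁻¹) :=
        Finset.sum_le_sum key
    _ = P * c * ∑ j ∈ Finset.range (J + 1),
          min (((2:ℝ) ^ j * c) ^ a) (((2:ℝ) ^ j * c)⁻¹) := by
        rw [Finset.mul_sum]
    _ ≤ P * c * (1 / (1 - (2:ℝ) ^ (-a)) + 2) := by
        apply mul_le_mul_of_nonneg_left (sum_min_le' a ha c hc0 hc1 (J + 1)) (by positivity)
    _ = (1 / (1 - (2:ℝ) ^ (-a)) + 2) * P * c := by ring
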